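/- There is a one-to-one correspondence between time warps p : ω+1 → ω+1 and downward-closed, monotone-in-the-second-argument relations (linear systems) R ⊆ ω × ω satisfying appropriate cocontinuity, given by (m, n) ∈ R iff y(m) ≤ p(y(n)), where y : ω → ω+1 is the embedding of positive naturals. In particular, for time warps p and q, p ≤ q pointwise if and only if for all positive naturals m, n: m ≤ p(n) implies m ≤ q(n). -/

import Mathlib

def IsTimeWarp (p : ℕ∞ → ℕ∞) : Prop :=
  ∀ S : Set ℕ∞, p (sSup S) = sSup (p '' S)

lemma le_of_nat_le_aux (a b : ℕ∞)
    (h : ∀ m : ℕ, 1 ≤ m → (m : ℕ∞) ≤ a → (m : ℕ∞) ≤ b) : a ≤ b := by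
  cases a with
  | top =>
    by_contra hb
    have hb' : b ≠ ⊤ := fun ht => hb (by simp [ht])
    lift b to ℕ using hb' with k
    have := h (k + 1) (by omega) le_top
    exact absurd this (by exact_mod_cast by omega)
  | coe k =>
    rcases Nat.eq_zero_or_pos k with rfl | hk
    · simp
    · exact h k hk le_rfl

/-- Time warps correspond to linear systems: for time warps `p` and `q`,
`p ≤ q` holds pointwise iff for all positive naturals `m, n`,
`m ≤ p n` implies `m ≤ q n`. -/
theorem le_iff_linear_system (p q : ℕ∞ → ℕ∞)
    (hp : IsTimeWarp p) (hq : IsTimeWarp q) :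
    (∀ n, p n ≤ q n) ↔
      (∀ m n : ℕ, 1 ≤ m → 1 ≤ n → (m : ℕ∞) ≤ p n → (m : ℕ∞) ≤ q n) := by
  constructor
  · intro h m n _ _ hm
    exact hm.trans (h n)
  · intro h
    have hnat : ∀ k : ℕ, p k ≤ q k := by
      intro k
      rcases Nat.eq_zero_or_pos k with rfl | hk
      · have hp0 : p 0 = ⊥ := by
          have := hp ∅
          simpa using this
        simp [hp0]
      · exact le_of_nat_le_aux _ _ fun m hm hle => h m k hm hk hle
    intro n
    cases n with
    | coe k => exact hnat k
    | top =>
      have htop : (⊤ : ℕ∞) = sSup (Set.range (Nat.cast : ℕ → ℕ∞)) := by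
        refine le_antisymm ?_ le_top
        apply le_of_nat_le_aux
        intro m _ _
        exact le_sSup ⟨m, rfl⟩
      rw [htop, hp]
      apply sSup_le
      rintro x ⟨_, ⟨m, rfl⟩, rfl⟩
      calc p m ≤ q m := hnat m
        _ ≤ q (sSup (Set.range (Nat.cast : ℕ → ℕ∞))) := by
            rw [hq]; exact le_sSup ⟨_, ⟨m, rfl⟩, rfl⟩
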